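/- arXiv:2601.07256 — 2 statements merged into one kernel-verified Lean document; each statement's English description precedes it below -/
import Mathlib

section
/- Abstract L⁰/L¹ equivalence: Let A be a nonempty set of admissible controls (measurable functions [0,T] → [-1,1]), let J₀(u) = μ(supp u) and J₁(u) = ∫₀ᵀ |u| dt. Suppose a minimizer of J₁ over A exists and that every minimizer of J₁ over A takes values in {-1,0,1} a.e. Then the set of minimizers of J₀ over A equals the set of minimizers of J₁ over A. -/
open MeasureTheory Set

/-- Abstract L⁰/L¹ equivalence: if a J₁ minimizer exists over the admissible set A and every
J₁ minimizer is bang-off-bang a.e., then the sets of J₀ and J₁ minimizers coincide. -/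
theorem l0_l1_equivalence (T : ℝ) (hT : 0 < T) (A : Set (ℝ → ℝ)) (hAne : A.Nonempty)
    (hmeas : ∀ u ∈ A, Measurable u)
    (hbd : ∀ u ∈ A, ∀ᵐ t ∂(volume.restrict (Icc (0:ℝ) T)), |u t| ≤ 1)
    (J0 J1 : (ℝ → ℝ) → ℝ)
    (hJ0 : ∀ u, J0 u = (volume {t ∈ Icc (0:ℝ) T | u t ≠ 0}).toReal)
    (hJ1 : ∀ u, J1 u = ∫ t in Icc (0:ℝ) T, |u t|)
    (hex : ∃ u₁ ∈ A, ∀ u ∈ A, J1 u₁ ≤ J1 u)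
    (hbang : ∀ u ∈ A, (∀ v ∈ A, J1 u ≤ J1 v) →
      ∀ᵐ t ∂(volume.restrict (Icc (0:ℝ) T)), u t ∈ ({-1, 0, 1} : Set ℝ)) :
    {u ∈ A | ∀ v ∈ A, J0 u ≤ J0 v} = {u ∈ A | ∀ v ∈ A, J1 u ≤ J1 v} := by
  classical
  -- basic facts per u
  have hset : ∀ u : ℝ → ℝ, {t ∈ Icc (0:ℝ) T | u t ≠ 0} = {t | u t ≠ 0} ∩ Icc (0:ℝ) T := by
    intro u; ext t; simp [and_comm]
  have hJ0eq : ∀ u ∈ A, J0 u = ∫ t in Icc (0:ℝ) T, ({t | u t ≠ 0}).indicator (fun _ => (1:ℝ)) t := by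
    intro u hu
    have hms : MeasurableSet {t | u t ≠ 0} :=
      ((hmeas u hu) (measurableSet_singleton 0)).compl
    rw [hJ0, integral_indicator_const _ hms, measureReal_def, Measure.restrict_apply hms, hset u]
    simp
  have hintu : ∀ u ∈ A, IntegrableOn (fun t => |u t|) (Icc (0:ℝ) T) := by
    intro u hu
    refine (integrable_const (1:ℝ)).mono' (hmeas u hu).abs.aestronglyMeasurable ?_
    filter_upwards [hbd u hu] with t ht
    simpa [abs_abs] using ht
  have hintind : ∀ u ∈ A, IntegrableOn (fun t => ({t | u t ≠ 0}).indicator (fun _ => (1:ℝ)) t) (Icc (0:ℝ) T) := by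
    intro u hu
    have hms : MeasurableSet {t | u t ≠ 0} :=
      ((hmeas u hu) (measurableSet_singleton 0)).compl
    refine (integrable_const (1:ℝ)).mono' ?_ ?_
    · exact (aestronglyMeasurable_indicator_iff hms).2 aestronglyMeasurable_const
    · filter_upwards with t
      by_cases h : u t = 0 <;> simp [Set.indicator, h]
  have hle : ∀ u ∈ A, J1 u ≤ J0 u := by
    intro u hu
    rw [hJ1, hJ0eq u hu]
    refine integral_mono_ae (hintu u hu) (hintind u hu) ?_
    filter_upwards [hbd u hu] with t ht
    by_cases h : u t = 0
    · simp [h]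
    · simpa [Set.indicator, h] using ht
  have heq : ∀ u ∈ A, (∀ᵐ t ∂(volume.restrict (Icc (0:ℝ) T)), u t ∈ ({-1, 0, 1} : Set ℝ)) →
      J0 u = J1 u := by
    intro u hu hb
    rw [hJ1, hJ0eq u hu]
    refine integral_congr_ae ?_
    filter_upwards [hb] with t ht
    rcases ht with h | h | h
    · simp [Set.indicator, h]
    · simp [Set.indicator, h]
    · simp only [Set.mem_singleton_iff] at h
      simp [Set.indicator, h]
  obtain ⟨u₁, hu₁A, hu₁min⟩ := hex
  have hu₁eq : J0 u₁ = J1 u₁ := heq u₁ hu₁A (hbang u₁ hu₁A hu₁min)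
  ext u
  simp only [mem_setOf_eq, Set.mem_sep_iff]
  constructor
  · rintro ⟨huA, hmin0⟩
    refine ⟨huA, ?_⟩
    have h1 : J1 u ≤ J1 u₁ := by
      calc J1 u ≤ J0 u := hle u huA
        _ ≤ J0 u₁ := hmin0 u₁ hu₁A
        _ = J1 u₁ := hu₁eq
    intro v hv
    exact h1.trans (hu₁min v hv)
  · rintro ⟨huA, hmin1⟩
    refine ⟨huA, fun v hv => ?_⟩
    calc J0 u = J1 u := heq u huA (hbang u huA hmin1)
      _ ≤ J1 v := hmin1 v hv
      _ ≤ J0 v := hle v hv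
end

section
/- In the abstract L⁰/L¹ equivalence setting, every minimizer of J₁ over A is also a minimizer of J₀ over A (the inclusion direction): if u₁* minimizes J₁ over A and u₁*(t) ∈ {-1,0,1} a.e., then J₀(u₁*) ≤ J₀(u) for all u ∈ A. -/
open MeasureTheory Set

/-- Inclusion direction: a bang-off-bang J₁ minimizer over A is also a J₀ minimizer over A. -/
theorem l1_min_is_l0_min (T : ℝ) (hT : 0 < T) (A : Set (ℝ → ℝ)) (hAne : A.Nonempty)
    (hmeas : ∀ u ∈ A, Measurable u)
    (hbd : ∀ u ∈ A, ∀ᵐ t ∂(volume.restrict (Icc (0:ℝ) T)), |u t| ≤ 1)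
    (J0 J1 : (ℝ → ℝ) → ℝ)
    (hJ0 : ∀ u, J0 u = (volume {t ∈ Icc (0:ℝ) T | u t ≠ 0}).toReal)
    (hJ1 : ∀ u, J1 u = ∫ t in Icc (0:ℝ) T, |u t|)
    (u₁ : ℝ → ℝ) (hu₁ : u₁ ∈ A) (hmin : ∀ u ∈ A, J1 u₁ ≤ J1 u)
    (hbang : ∀ᵐ t ∂(volume.restrict (Icc (0:ℝ) T)), u₁ t ∈ ({-1, 0, 1} : Set ℝ)) :
    ∀ u ∈ A, J0 u₁ ≤ J0 u := by
  intro u hu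
  set μ := volume.restrict (Icc (0:ℝ) T) with hμdef
  have hfin : IsFiniteMeasure μ := by
    constructor
    rw [hμdef, Measure.restrict_apply_univ]
    exact (measure_Icc_lt_top)
  have hmu₁ := hmeas u₁ hu₁
  have hmu := hmeas u hu
  have hS₁ : MeasurableSet {t | u₁ t ≠ 0} :=
    hmu₁ (measurableSet_singleton (0:ℝ)).compl
  have hS : MeasurableSet {t | u t ≠ 0} :=
    hmu (measurableSet_singleton (0:ℝ)).compl
  -- rewrite J0 in terms of μ
  have hrestr : ∀ (v : ℝ → ℝ), MeasurableSet {t | v t ≠ 0} →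
      (volume {t ∈ Icc (0:ℝ) T | v t ≠ 0}).toReal = (μ {t | v t ≠ 0}).toReal := by
    intro v hv
    rw [hμdef, Measure.restrict_apply hv]
    have : {t | v t ≠ 0} ∩ Icc (0:ℝ) T = {t ∈ Icc (0:ℝ) T | v t ≠ 0} := by
      ext t; simp [and_comm]
    rw [this]
  -- indicator integrals
  have hindint : ∀ (s : Set ℝ), MeasurableSet s →
      Integrable (s.indicator (fun _ => (1:ℝ))) μ := by
    intro s hs
    exact (integrable_const (1:ℝ)).indicator hs
  have hind_eq : ∀ (s : Set ℝ) (hs : MeasurableSet s),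
      ∫ t, s.indicator (fun _ => (1:ℝ)) t ∂μ = (μ s).toReal := by
    intro s hs
    rw [integral_indicator hs]
    simp [Measure.restrict_apply hs]
    rfl
  -- J1 u₁ = J0 u₁
  have heq₁ : ∫ t, |u₁ t| ∂μ = (μ {t | u₁ t ≠ 0}).toReal := by
    rw [← hind_eq _ hS₁]
    apply integral_congr_ae
    filter_upwards [hbang] with t ht
    simp only [Set.mem_insert_iff, Set.mem_singleton_iff] at ht
    rcases ht with h | h | h <;>
      simp [Set.indicator_apply, Set.mem_setOf_eq, h]
  -- J1 u ≤ J0 u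
  have hint_u : Integrable (fun t => |u t|) μ := by
    apply (hindint _ hS).mono (hmu.abs.aestronglyMeasurable)
    filter_upwards [hbd u hu] with t ht
    rw [Real.norm_eq_abs, abs_abs]
    by_cases h : u t = 0
    · simp [h, Set.indicator_apply]
    · calc |u t| ≤ 1 := ht
        _ ≤ ‖Set.indicator {t | u t ≠ 0} (fun _ => (1:ℝ)) t‖ := by
            simp [Set.indicator_apply, Set.mem_setOf_eq, h]
  have hle_u : ∫ t, |u t| ∂μ ≤ (μ {t | u t ≠ 0}).toReal := by
    rw [← hind_eq _ hS]
    apply integral_mono_ae hint_u (hindint _ hS)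
    filter_upwards [hbd u hu] with t ht
    by_cases h : u t = 0
    · simp [h, Set.indicator_apply]
    · calc |u t| ≤ 1 := ht
        _ ≤ _ := by simp [Set.indicator_apply, Set.mem_setOf_eq, h]
  have hm := hmin u hu
  rw [hJ1 u₁, hJ1 u] at hm
  rw [hJ0 u₁, hJ0 u, hrestr u₁ hS₁, hrestr u hS]
  calc (μ {t | u₁ t ≠ 0}).toReal = ∫ t, |u₁ t| ∂μ := heq₁.symm
    _ ≤ ∫ t, |u t| ∂μ := hm
    _ ≤ (μ {t | u t ≠ 0}).toReal := hle_u
end
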